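/- arXiv:1502.06885 — 2 statements merged into one kernel-verified Lean document; each statement's English description precedes it below -/
import Mathlib

section
/- Let F and E be number fields with E a quadratic extension of F, and let σ be the nontrivial F-algebra automorphism of E (i.e. σ : E ≃ E is an F-algebra automorphism with σ ≠ id). If ε is a unit of 𝓞_E such that w(ε) = w′(ε) for every pair of infinite places w, w′ of E having the same restriction to F, then ε·σ(ε)⁻¹ is a root of unity of E. -/
open NumberField

/-- Let `E/F` be a quadratic extension of number fields and let `σ` be the
nontrivial `F`-algebra automorphism of `E`.  If `ε` is a unit of `𝓞 E` such that
`w ε = w' ε` for every pair of infinite places `w, w'` of `E` with the same restriction to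
`F`, then `ε * σ(ε)⁻¹` is a root of unity of `E`. -/
theorem stmt1 (F E : Type*) [Field F] [Field E] [NumberField F] [NumberField E]
    [Algebra F E] (hquad : Module.finrank F E = 2)
    (σ : E ≃ₐ[F] E) (hσ : σ ≠ (AlgEquiv.refl : E ≃ₐ[F] E))
    (ε : (𝓞 E)ˣ)
    (hε : ∀ w w' : InfinitePlace E, w.comap (algebraMap F E) = w'.comap (algebraMap F E) →
        w ((ε : 𝓞 E) : E) = w' ((ε : 𝓞 E) : E)) :
    ∃ n : ℕ, 0 < n ∧ (((ε : 𝓞 E) : E) * (σ ((ε : 𝓞 E) : E))⁻¹) ^ n = 1 := by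
  set e : E := ((ε : 𝓞 E) : E) with he
  have hmul : e * (((ε⁻¹ : (𝓞 E)ˣ) : 𝓞 E) : E) = 1 := by
    rw [← map_mul]
    norm_cast
    simp
  have hinv : (((ε⁻¹ : (𝓞 E)ˣ) : 𝓞 E) : E) = e⁻¹ :=
    (inv_eq_of_mul_eq_one_right hmul).symm
  have hint : IsIntegral ℤ (e * (σ e)⁻¹) := by
    have h1 : IsIntegral ℤ e := RingOfIntegers.isIntegral_coe _
    have h2 : IsIntegral ℤ ((σ e)⁻¹) := by
      have : (σ e)⁻¹ = σ (((ε⁻¹ : (𝓞 E)ˣ) : 𝓞 E) : E) := by rw [hinv, map_inv₀]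
      rw [this]
      exact (RingOfIntegers.isIntegral_coe _).map (σ : E →+* E).toIntAlgHom
    exact h1.mul h2
  have hne : e ≠ 0 := by
    simp [he, RingOfIntegers.coe_eq_zero_iff]
  have hall : ∀ φ : E →+* ℂ, ‖φ (e * (σ e)⁻¹)‖ = 1 := by
    intro φ
    have key : InfinitePlace.mk φ (σ e) = InfinitePlace.mk φ e := by
      have := hε ((InfinitePlace.mk φ).comap (σ : E →+* E)) (InfinitePlace.mk φ) ?_
      · exact this
      · rw [← InfinitePlace.comap_comp]
        congr 1
        ext x
        simp
    have habs : InfinitePlace.mk φ (e * (σ e)⁻¹) = 1 := by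
      rw [map_mul, map_inv₀, key]
      field_simp
      exact div_self (by simp [map_eq_zero, hne])
    simpa [InfinitePlace.apply] using habs
  obtain ⟨n, hn, h⟩ := Embeddings.pow_eq_one_of_norm_eq_one E ℂ hint hall
  exact ⟨n, hn, h⟩
end

section
/- Let F and E be number fields with E a quadratic extension of F, and assume that some nonzero prime ideal of 𝓞_F of odd residue characteristic ramifies in E. If ε is a unit of 𝓞_E such that ε^(2^k) lies in the image of F in E for some natural number k, then ε itself lies in the image of F in E (and hence is a unit of 𝓞_F). -/
open NumberField Polynomial Module IntermediateField

section Aux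

variable (F E : Type*) [Field F] [Field E] [NumberField F] [NumberField E] [Algebra F E]

set_option maxHeartbeats 1000000 in
set_option synthInstance.maxHeartbeats 1000000 in
private theorem stmt3_key (hquad : Module.finrank F E = 2)
    (hram : ∃ p : Ideal (𝓞 F), p.IsPrime ∧ p ≠ ⊥ ∧ (2 : 𝓞 F) ∉ p ∧
      ∃ P : Ideal (𝓞 E), P.IsPrime ∧ P.comap (algebraMap (𝓞 F) (𝓞 E)) = p ∧
        Ideal.ramificationIdx' p P = 2)
    (η : (𝓞 E)ˣ)
    (h2 : ((η : 𝓞 E) : E) ^ 2 ∈ Set.range (algebraMap F E)) :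
    ((η : 𝓞 E) : E) ∈ Set.range (algebraMap F E) := by
  classical
  by_contra hx
  obtain ⟨p, hp, hp0, hp2, P, hP, hPp, hPe⟩ := hram
  obtain ⟨a, ha⟩ := h2
  set x : E := ((η : 𝓞 E) : E) with hxdef
  have hxint : IsIntegral F x := IsIntegral.of_finite F x
  have hmon : (X ^ 2 - C a).Monic := monic_X_pow_sub_C a two_ne_zero
  have hroot : Polynomial.aeval x (X ^ 2 - C a) = 0 := by
    simp [ha]
  have hdvd : minpoly F x ∣ X ^ 2 - C a := minpoly.dvd F x hroot
  have hdeg : (minpoly F x).natDegree = 2 := by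
    have h1 : 2 ≤ (minpoly F x).natDegree := (minpoly.two_le_natDegree_iff hxint).mpr (by
      simpa using hx)
    have h2' : (minpoly F x).natDegree ≤ 2 := by
      simpa [natDegree_X_pow_sub_C] using Polynomial.natDegree_le_of_dvd hdvd hmon.ne_zero
    omega
  have hq : minpoly F x = X ^ 2 - C a := by
    obtain ⟨c, hc⟩ := hdvd
    have hc0 : c ≠ 0 := by
      rintro rfl
      rw [mul_zero] at hc
      exact hmon.ne_zero hc
    have hcd : c.natDegree = 0 := by
      have h := Polynomial.natDegree_mul (minpoly.ne_zero hxint) hc0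
      rw [← hc, natDegree_X_pow_sub_C, hdeg] at h
      omega
    have hcm : c.Monic := by
      have h := hmon
      rw [hc] at h
      exact (minpoly.monic hxint).of_mul_monic_left h
    have hc1 : c = 1 := hcm.natDegree_eq_zero.mp hcd
    rw [hc, hc1, mul_one]
  -- the conjugation automorphism of E over F sending x to -x
  have htop : F⟮x⟯ = ⊤ := by
    apply IntermediateField.eq_of_le_of_finrank_le le_top
    rw [IntermediateField.adjoin.finrank hxint, hdeg, IntermediateField.finrank_top', hquad]
  let e : F⟮x⟯ ≃ₐ[F] E := (IntermediateField.equivOfEq htop).trans IntermediateField.topEquiv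
  let pb : PowerBasis F E := (IntermediateField.adjoin.powerBasis hxint).map e
  have hgen : pb.gen = x := by
    simp only [pb, PowerBasis.map_gen, IntermediateField.adjoin.powerBasis_gen]
    rfl
  have hrootneg : Polynomial.aeval (-x) (minpoly F pb.gen) = 0 := by
    rw [hgen, hq]
    simp [neg_pow, ha]
  let σ : E →ₐ[F] E := pb.lift (-x) hrootneg
  have hσx : σ x = -x := by
    rw [← hgen]
    exact pb.lift_gen _ _
  -- restrict to the rings of integers
  let σ' : (𝓞 E) →ₐ[𝓞 F] (𝓞 E) := galRestrictHom (𝓞 F) F E (𝓞 E) σ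
  have hσ'η : σ' (η : 𝓞 E) = -(η : 𝓞 E) := by
    apply IsFractionRing.injective (𝓞 E) E
    rw [algebraMap_galRestrictHom_apply, map_neg]
    exact hσx
  -- ideal-theoretic facts
  haveI : p.IsMaximal := hp.isMaximal hp0
  haveI hPliesOver : P.LiesOver p := ⟨hPp.symm⟩
  have hinj : Function.Injective (algebraMap (𝓞 F) (𝓞 E)) :=
    FaithfulSMul.algebraMap_injective (𝓞 F) (𝓞 E)
  have hmap0 : Ideal.map (algebraMap (𝓞 F) (𝓞 E)) p ≠ ⊥ :=
    fun h => hp0 ((Ideal.map_eq_bot_iff_of_injective hinj).mp h)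
  have hmem : ∀ Q : Ideal (𝓞 E), Q.IsPrime → Q.comap (algebraMap (𝓞 F) (𝓞 E)) = p →
      Q ∈ (UniqueFactorizationMonoid.factors
        (Ideal.map (algebraMap (𝓞 F) (𝓞 E)) p)).toFinset := by
    intro Q hQ hQp
    rw [Multiset.mem_toFinset, UniqueFactorizationMonoid.factors_eq_normalizedFactors,
      Ideal.mem_normalizedFactors_iff hmap0]
    exact ⟨hQ, Ideal.map_le_iff_le_comap.mpr hQp.ge⟩
  have hsum := Ideal.sum_ramification_inertia (S := 𝓞 E) (p := p) F E hp0
  rw [hquad] at hsum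
  have hPmem := hmem P hP hPp
  have hfPpos := Ideal.inertiaDeg'_pos p P
  have hfP : Ideal.inertiaDeg' p P = 1 := by
    have hle := Finset.single_le_sum
      (f := fun Q => Ideal.ramificationIdx' p Q *
        Ideal.inertiaDeg' p Q)
      (fun i _ => Nat.zero_le _) hPmem
    rw [hsum, hPe] at hle
    omega
  -- σ' fixes P
  set Q : Ideal (𝓞 E) := P.comap σ'.toRingHom with hQdef
  haveI hQprime : Q.IsPrime := Ideal.IsPrime.comap _
  have hQp : Q.comap (algebraMap (𝓞 F) (𝓞 E)) = p := by
    have hcomp : σ'.toRingHom.comp (algebraMap (𝓞 F) (𝓞 E)) = algebraMap (𝓞 F) (𝓞 E) :=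
      RingHom.ext fun r => σ'.commutes r
    rw [hQdef, Ideal.comap_comap, hcomp, hPp]
  have hQP : Q = P := by
    by_contra hne
    have hQmem := hmem Q hQprime hQp
    haveI : Q.LiesOver p := ⟨hQp.symm⟩
    have heQ : Ideal.ramificationIdx' p Q ≠ 0 :=
      Ideal.IsDedekindDomain.ramificationIdx_ne_zero hmap0 hQprime
        (Ideal.map_le_iff_le_comap.mpr hQp.ge)
    have hfQ := Ideal.inertiaDeg'_pos p Q
    have hsub : ({P, Q} : Finset (Ideal (𝓞 E))) ⊆ (UniqueFactorizationMonoid.factors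
        (Ideal.map (algebraMap (𝓞 F) (𝓞 E)) p)).toFinset := by
      intro R hR
      rcases Finset.mem_insert.mp hR with h | h
      · exact h ▸ hPmem
      · exact (Finset.mem_singleton.mp h) ▸ hQmem
    have hpair := Finset.sum_le_sum_of_subset (f := fun Q =>
      Ideal.ramificationIdx' p Q *
        Ideal.inertiaDeg' p Q) hsub
    rw [Finset.sum_pair (fun h => hne h.symm), hsum, hPe, hfP] at hpair
    have h1 : 1 ≤ Ideal.ramificationIdx' p Q *
        Ideal.inertiaDeg' p Q :=
      Nat.one_le_iff_ne_zero.mpr (mul_ne_zero heQ hfQ.ne')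
    omega
  -- residue field extension is trivial
  letI : Field ((𝓞 F) ⧸ p) := Ideal.Quotient.field p
  have hfin : Module.finrank ((𝓞 F) ⧸ p) ((𝓞 E) ⧸ P) = 1 := by
    rw [← Ideal.inertiaDeg'_algebraMap p P]
    exact hfP
  haveI : Nontrivial ((𝓞 E) ⧸ P) := Ideal.Quotient.nontrivial_of_liesOver_of_isPrime P p
  have hsurj : Function.Surjective (algebraMap ((𝓞 F) ⧸ p) ((𝓞 E) ⧸ P)) := by
    have hbot := Subalgebra.bot_eq_top_of_finrank_eq_one hfin
    intro z
    have hz : z ∈ (⊤ : Subalgebra ((𝓞 F) ⧸ p) ((𝓞 E) ⧸ P)) := trivial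
    rw [← hbot, Algebra.mem_bot] at hz
    exact hz
  obtain ⟨ybar, hy⟩ := hsurj (Ideal.Quotient.mk P (η : 𝓞 E))
  obtain ⟨y, rfl⟩ := Ideal.Quotient.mk_surjective ybar
  have hcomm : algebraMap ((𝓞 F) ⧸ p) ((𝓞 E) ⧸ P) (Ideal.Quotient.mk p y) =
      Ideal.Quotient.mk P (algebraMap (𝓞 F) (𝓞 E) y) := rfl
  have hdiff : algebraMap (𝓞 F) (𝓞 E) y - (η : 𝓞 E) ∈ P :=
    Ideal.Quotient.eq.mp (hcomm ▸ hy)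
  have hdiffQ : algebraMap (𝓞 F) (𝓞 E) y - (η : 𝓞 E) ∈ Q := by
    rw [hQP]; exact hdiff
  have hdiff2 : σ' (algebraMap (𝓞 F) (𝓞 E) y - (η : 𝓞 E)) ∈ P :=
    Ideal.mem_comap.mp hdiffQ
  rw [map_sub, hσ'η, AlgHom.commutes] at hdiff2
  have h2η : (2 : 𝓞 E) * (η : 𝓞 E) ∈ P := by
    have hsub2 := Ideal.sub_mem P hdiff2 hdiff
    have : algebraMap (𝓞 F) (𝓞 E) y - - (η : 𝓞 E) -
        (algebraMap (𝓞 F) (𝓞 E) y - (η : 𝓞 E)) = (2 : 𝓞 E) * (η : 𝓞 E) := by ring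
    rwa [this] at hsub2
  rcases hP.mem_or_mem h2η with h2m | hηm
  · apply hp2
    rw [← hPp, Ideal.mem_comap]
    have h22 : algebraMap (𝓞 F) (𝓞 E) 2 = (2 : 𝓞 E) := map_ofNat _ 2
    rw [h22]
    exact h2m
  · exact hP.ne_top (Ideal.eq_top_of_isUnit_mem P hηm η.isUnit)

end Aux

/-- Let `E/F` be a quadratic extension of number fields such that some
nonzero prime ideal of `𝓞 F` of odd residue characteristic ramifies in `E`.  If `ε` is a
unit of `𝓞 E` such that `ε ^ (2 ^ k)` lies in the image of `F` in `E` for some natural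
number `k`, then `ε` itself lies in the image of `F` in `E`, and hence is (the image of) a
unit of `𝓞 F`. -/
theorem stmt3 (F E : Type*) [Field F] [Field E] [NumberField F] [NumberField E]
    [Algebra F E] (hquad : Module.finrank F E = 2)
    (hram : ∃ p : Ideal (𝓞 F), p.IsPrime ∧ p ≠ ⊥ ∧ (2 : 𝓞 F) ∉ p ∧
      ∃ P : Ideal (𝓞 E), P.IsPrime ∧ P.comap (algebraMap (𝓞 F) (𝓞 E)) = p ∧
        Ideal.ramificationIdx' p P = 2)
    (ε : (𝓞 E)ˣ)
    (hpow : ∃ k : ℕ, ((ε : 𝓞 E) : E) ^ (2 ^ k) ∈ Set.range (algebraMap F E)) :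
    ((ε : 𝓞 E) : E) ∈ Set.range (algebraMap F E) ∧
      ∃ u : (𝓞 F)ˣ, algebraMap F E ((u : 𝓞 F) : F) = ((ε : 𝓞 E) : E) := by
  obtain ⟨k, hk⟩ := hpow
  have hcast : ∀ (δ : (𝓞 E)ˣ) (n : ℕ), (((δ ^ n : (𝓞 E)ˣ) : 𝓞 E) : E)
      = ((δ : 𝓞 E) : E) ^ n := by
    intro δ n
    push_cast
    rfl
  have hmain : ∀ (k : ℕ) (δ : (𝓞 E)ˣ), ((δ : 𝓞 E) : E) ^ (2 ^ k) ∈ Set.range (algebraMap F E) →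
      ((δ : 𝓞 E) : E) ∈ Set.range (algebraMap F E) := by
    intro k
    induction k with
    | zero => intro δ h; simpa using h
    | succ n ih =>
      intro δ h
      apply ih δ
      have hkey := stmt3_key F E hquad hram (δ ^ 2 ^ n) (by
        rw [hcast, ← pow_mul, ← pow_succ]
        exact h)
      rwa [hcast] at hkey
  have hrange := hmain k ε hk
  refine ⟨hrange, ?_⟩
  obtain ⟨f, hf⟩ := hrange
  have hinv : (((ε⁻¹ : (𝓞 E)ˣ) : 𝓞 E) : E) = (((ε : 𝓞 E) : E))⁻¹ := by
    refine eq_inv_of_mul_eq_one_left ?_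
    have h1 : ((ε⁻¹ : (𝓞 E)ˣ) : 𝓞 E) * (ε : 𝓞 E) = 1 := by
      rw [← Units.val_mul, inv_mul_cancel, Units.val_one]
    calc (((ε⁻¹ : (𝓞 E)ˣ) : 𝓞 E) : E) * (((ε : 𝓞 E)) : E)
        = algebraMap (𝓞 E) E (((ε⁻¹ : (𝓞 E)ˣ) : 𝓞 E) * (ε : 𝓞 E)) := by rw [map_mul]
      _ = 1 := by rw [h1, map_one]
  obtain ⟨g, hg⟩ := hmain k ε⁻¹ (by
    obtain ⟨c, hc⟩ := hk
    refine ⟨c⁻¹, ?_⟩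
    rw [map_inv₀, hc, ← inv_pow, hinv])
  have hf0 : f ≠ 0 := by
    rintro rfl
    rw [map_zero] at hf
    exact (Units.ne_zero ε) (by
      apply IsFractionRing.injective (𝓞 E) E
      rw [map_zero]
      exact hf.symm)
  have hfint : IsIntegral ℤ f := by
    rw [← isIntegral_algebraMap_iff (algebraMap F E).injective, hf]
    exact (ε : 𝓞 E).2
  have hgint : IsIntegral ℤ g := by
    rw [← isIntegral_algebraMap_iff (algebraMap F E).injective, hg]
    exact ((ε⁻¹ : (𝓞 E)ˣ) : 𝓞 E).2
  have hfg : f * g = 1 := by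
    apply (algebraMap F E).injective
    rw [map_mul, hf, hg, map_one]
    norm_cast
    simp
  refine ⟨⟨⟨f, hfint⟩, ⟨g, hgint⟩, ?_, ?_⟩, hf⟩
  · exact NumberField.RingOfIntegers.ext (by exact hfg)
  · exact NumberField.RingOfIntegers.ext (by exact (mul_comm g f).trans hfg)
end
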